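/- arXiv:2412.13427 — 2 statements merged into one kernel-verified Lean document; each statement's English description precedes it below -/
import Mathlib

section
/- Let μ = ν * ω be a convolution of two compactly supported Borel probability measures on ℝ, and let Λ be a bi-zero set of ν. Then Λ is a bi-zero set of μ; moreover, if ω is not a Dirac measure, then Λ is not a spectrum of μ. -/
open MeasureTheory Complex

/-- The exponential function `x ↦ e^{2πiλx}`. -/
noncomputable def expFn (l : ℝ) : ℝ → ℂ := fun x => Complex.exp (2 * Real.pi * Complex.I * l * x)

/-- The Fourier transform `μ̂(t) = ∫ e^{2πitx} dμ(x)`. -/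
noncomputable def ft (μ : Measure ℝ) (t : ℝ) : ℂ :=
  ∫ x, Complex.exp (2 * Real.pi * Complex.I * t * x) ∂μ

/-- `Λ` is a bi-zero set of `μ` : `(Λ - Λ) \ {0} ⊆ {t : μ̂(t) = 0}`. -/
def IsBiZero (μ : Measure ℝ) (Λ : Set ℝ) : Prop :=
  ∀ a ∈ Λ, ∀ b ∈ Λ, a ≠ b → ft μ (a - b) = 0

/-- `Λ` is a spectrum of `μ` : the exponentials `e^{2πiλx}`, `λ ∈ Λ`, belong to `L²(μ)` and
form an orthonormal basis of `L²(μ)`. -/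
def IsSpectrum (μ : Measure ℝ) (Λ : Set ℝ) : Prop :=
  ∃ h : ∀ l : Λ, MemLp (expFn (l : ℝ)) 2 μ,
    Orthonormal ℂ (fun l : Λ => (h l).toLp (expFn (l : ℝ))) ∧
    (Submodule.span ℂ
      (Set.range fun l : Λ => (h l).toLp (expFn (l : ℝ)))).topologicalClosure = ⊤

lemma expFn_cont (l : ℝ) : Continuous (expFn l) := by
  unfold expFn; fun_prop

lemma expFn_norm (l x : ℝ) : ‖expFn l x‖ = 1 := by
  unfold expFn
  rw [Complex.norm_exp]
  have : (2 * ↑Real.pi * I * ↑l * ↑x : ℂ).re = 0 := by simp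
  rw [this, Real.exp_zero]

lemma ft_zero (μ : Measure ℝ) [IsProbabilityMeasure μ] : ft μ 0 = 1 := by
  unfold ft; simp

lemma ft_norm_le (μ : Measure ℝ) [IsProbabilityMeasure μ] (t : ℝ) : ‖ft μ t‖ ≤ 1 := by
  unfold ft
  calc ‖∫ x, Complex.exp (2 * Real.pi * Complex.I * t * x) ∂μ‖
      ≤ 1 * (μ Set.univ).toReal := by
        apply norm_integral_le_of_norm_le_const
        filter_upwards with x
        exact le_of_eq (expFn_norm t x)
    _ = 1 := by simp

lemma ft_integrable (μ : Measure ℝ) [IsProbabilityMeasure μ] (t : ℝ) :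
    Integrable (expFn t) μ := by
  refine ⟨(expFn_cont t).aestronglyMeasurable, ?_⟩
  apply HasFiniteIntegral.of_bounded (C := 1)
  filter_upwards with x
  exact le_of_eq (expFn_norm t x)

lemma ft_continuous (μ : Measure ℝ) [IsProbabilityMeasure μ] : Continuous (ft μ) := by
  apply continuous_of_dominated (bound := fun _ => (1:ℝ))
  · exact fun t => ((expFn_cont t)).aestronglyMeasurable
  · intro t; filter_upwards with x; exact le_of_eq (expFn_norm t x)
  · exact integrable_const 1
  · filter_upwards with x
    have : Continuous fun t : ℝ => Complex.exp (2 * Real.pi * Complex.I * t * x) := by fun_prop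
    exact this

lemma ft_conv (ν ω : Measure ℝ) [IsProbabilityMeasure ν] [IsProbabilityMeasure ω] (t : ℝ) :
    ft (Measure.conv ν ω) t = ft ν t * ft ω t := by
  unfold ft Measure.conv
  rw [show (fun x : ℝ => cexp (2 * ↑Real.pi * I * ↑t * ↑x)) = expFn t from rfl,
    integral_map (μ := ν.prod ω) (φ := fun p : ℝ × ℝ => p.1 + p.2) (by fun_prop)
      (expFn_cont t).aestronglyMeasurable]
  unfold expFn
  have h : ∀ p : ℝ × ℝ, Complex.exp (2 * Real.pi * Complex.I * t * (↑(p.1 + p.2) : ℂ)) =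
      Complex.exp (2 * Real.pi * Complex.I * t * p.1) *
      Complex.exp (2 * Real.pi * Complex.I * t * p.2) := by
    intro p
    rw [← Complex.exp_add]
    push_cast
    ring_nf
  simp_rw [h]
  exact integral_prod_mul (μ := ν) (ν := ω) (fun x => Complex.exp (2 * Real.pi * Complex.I * t * x))
    (fun y => Complex.exp (2 * Real.pi * Complex.I * t * y))

lemma expFn_memL2 (μ : Measure ℝ) [IsProbabilityMeasure μ] (l : ℝ) :
    MemLp (expFn l) 2 μ :=
  MemLp.of_bound (expFn_cont l).aestronglyMeasurable 1
    (by filter_upwards with x; exact le_of_eq (expFn_norm l x))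

lemma inner_expFn (μ : Measure ℝ) [IsProbabilityMeasure μ] (a b : ℝ)
    (ha : MemLp (expFn a) 2 μ) (hb : MemLp (expFn b) 2 μ) :
    @inner ℂ _ _ (ha.toLp (expFn a)) (hb.toLp (expFn b)) = ft μ (b - a) := by
  rw [L2.inner_def]
  have key : ∀ x : ℝ, (inner ℂ (expFn a x) (expFn b x) : ℂ)
      = Complex.exp (2 * Real.pi * Complex.I * (b - a) * x) := by
    intro x
    rw [RCLike.inner_apply]
    unfold expFn
    rw [← Complex.exp_conj, ← Complex.exp_add]
    congr 1
    have h2 : (starRingEnd ℂ) (2 * ↑Real.pi * I * ↑a * ↑x) = -(2 * ↑Real.pi * I * ↑a * ↑x) := by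
      simp only [map_mul, Complex.conj_I, Complex.conj_ofReal, map_ofNat]
      ring
    rw [h2]
    push_cast
    ring
  have : (∫ x, (inner ℂ ((ha.toLp (expFn a)) x) ((hb.toLp (expFn b)) x) : ℂ) ∂μ)
      = ∫ x, Complex.exp (2 * Real.pi * Complex.I * (b - a) * x) ∂μ := by
    apply integral_congr_ae
    filter_upwards [ha.coeFn_toLp, hb.coeFn_toLp] with x h1 h3
    rw [h1, h3, key]
  rw [this]
  unfold ft
  congr 1
  funext x
  congr 1
  push_cast
  ring

lemma ft_neg (μ : Measure ℝ) (t : ℝ) : ft μ (-t) = (starRingEnd ℂ) (ft μ t) := by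
  unfold ft
  rw [← integral_conj]
  congr 1
  funext x
  rw [← Complex.exp_conj]
  congr 1
  simp only [map_mul, Complex.conj_I, Complex.conj_ofReal, map_ofNat]
  push_cast
  ring

lemma cos_ae_one (ω : Measure ℝ) [IsProbabilityMeasure ω] (t : ℝ) (h : ‖ft ω t‖ = 1) :
    ∀ᵐ p ∂(ω.prod ω), Real.cos (2 * Real.pi * t * (p.1 - p.2)) = 1 := by
  set F : ℝ × ℝ → ℂ := fun p => expFn t p.1 * expFn (-t) p.2 with hF
  have hFc : Continuous F := by
    apply ((expFn_cont t).comp continuous_fst).mul ((expFn_cont (-t)).comp continuous_snd)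
  have hFn : ∀ p : ℝ × ℝ, ‖F p‖ = 1 := by
    intro p
    rw [hF]
    simp only [norm_mul, expFn_norm, mul_one]
  have hFint : Integrable F (ω.prod ω) :=
    ⟨hFc.aestronglyMeasurable, HasFiniteIntegral.of_bounded (C := 1)
      (by filter_upwards with p; exact le_of_eq (hFn p))⟩
  have hFI : ∫ p, F p ∂(ω.prod ω) = 1 := by
    rw [hF]
    rw [integral_prod_mul (μ := ω) (ν := ω) (expFn t) (expFn (-t))]
    have h1 : ∫ x, expFn t x ∂ω = ft ω t := rfl
    have h2 : ∫ x, expFn (-t) x ∂ω = ft ω (-t) := rfl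
    rw [h1, h2, ft_neg, Complex.mul_conj, Complex.normSq_eq_norm_sq, h]
    norm_num
  have key : ∀ p : ℝ × ℝ, 1 - Real.cos (2 * Real.pi * t * (p.1 - p.2)) = (1 - F p).re := by
    intro p
    have hFp : F p = Complex.exp (((2 * Real.pi * t * (p.1 - p.2) : ℝ) : ℂ) * I) := by
      rw [hF]
      show Complex.exp _ * Complex.exp _ = _
      rw [← Complex.exp_add]
      congr 1
      push_cast
      ring
    rw [hFp, Complex.sub_re, Complex.one_re, Complex.exp_ofReal_mul_I_re]
  have hint : Integrable (fun p : ℝ × ℝ => 1 - Real.cos (2 * Real.pi * t * (p.1 - p.2)))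
      (ω.prod ω) := by
    refine ⟨Continuous.aestronglyMeasurable (by fun_prop), ?_⟩
    apply HasFiniteIntegral.of_bounded (C := 2)
    filter_upwards with p
    rw [Real.norm_eq_abs, abs_le]
    constructor
    · nlinarith [Real.neg_one_le_cos (2 * Real.pi * t * (p.1 - p.2)),
        Real.cos_le_one (2 * Real.pi * t * (p.1 - p.2))]
    · nlinarith [Real.neg_one_le_cos (2 * Real.pi * t * (p.1 - p.2))]
  have hzero : ∫ p, (1 - Real.cos (2 * Real.pi * t * (p.1 - p.2))) ∂(ω.prod ω) = 0 := by
    simp_rw [key]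
    have : ∫ p, (1 - F p).re ∂(ω.prod ω) = (∫ p, (1 - F p) ∂(ω.prod ω)).re := by
      exact integral_re ((integrable_const 1).sub hFint)
    rw [this, integral_sub (integrable_const 1) hFint, hFI]
    simp
  have h0 := (integral_eq_zero_iff_of_nonneg_ae ?_ hint).mp hzero
  · filter_upwards [h0] with p hp
    have : (1 : ℝ) - Real.cos (2 * Real.pi * t * (p.1 - p.2)) = 0 := hp
    linarith
  · filter_upwards with p
    have := Real.cos_le_one (2 * Real.pi * t * (p.1 - p.2))
    simp only [Pi.zero_apply]
    linarith

lemma dirac_of_two_norms (ω : Measure ℝ) [IsProbabilityMeasure ω] (t₁ t₂ : ℝ)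
    (ht₁ : t₁ ≠ 0) (hirr : Irrational (t₂ / t₁))
    (h1 : ‖ft ω t₁‖ = 1) (h2 : ‖ft ω t₂‖ = 1) : ∃ a, ω = Measure.dirac a := by
  have hc1 := cos_ae_one ω t₁ h1
  have hc2 := cos_ae_one ω t₂ h2
  have hdiag : ∀ᵐ p ∂(ω.prod ω), p.1 = p.2 := by
    filter_upwards [hc1, hc2] with p e1 e2
    by_contra hne
    obtain ⟨n, hn⟩ := (Real.cos_eq_one_iff _).mp e1
    obtain ⟨m, hm⟩ := (Real.cos_eq_one_iff _).mp e2
    have hπ : (2 * Real.pi) ≠ 0 := by positivity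
    have e1' : t₁ * (p.1 - p.2) = n := by
      have h' : (2 * Real.pi) * (t₁ * (p.1 - p.2)) = (2 * Real.pi) * (n : ℝ) := by
        linarith [hn]
      exact mul_left_cancel₀ hπ h'
    have e2' : t₂ * (p.1 - p.2) = m := by
      have h' : (2 * Real.pi) * (t₂ * (p.1 - p.2)) = (2 * Real.pi) * (m : ℝ) := by
        linarith [hm]
      exact mul_left_cancel₀ hπ h'
    have hd : p.1 - p.2 ≠ 0 := sub_ne_zero.mpr hne
    have hn0 : (n : ℝ) ≠ 0 := by rw [← e1']; exact mul_ne_zero ht₁ hd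
    have hq : t₂ / t₁ = (m : ℝ) / n := by
      rw [div_eq_div_iff ht₁ hn0]
      have : t₂ * (t₁ * (p.1 - p.2)) = t₁ * (t₂ * (p.1 - p.2)) := by ring
      rw [e1', e2'] at this
      linarith
    apply Rat.not_irrational ((m : ℚ) / n)
    have : (((m : ℚ) / n : ℚ) : ℝ) = (m : ℝ) / n := by push_cast; ring
    rwa [hq, ← this] at hirr
  have hset : MeasurableSet {p : ℝ × ℝ | p.1 = p.2} :=
    measurableSet_eq_fun measurable_fst measurable_snd
  have hnull : (ω.prod ω) {p : ℝ × ℝ | p.1 = p.2}ᶜ = 0 := by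
    rw [ae_iff] at hdiag
    convert hdiag using 2
    ext p; simp
  rw [Measure.measure_prod_null hset.compl] at hnull
  have hnb : (ae ω).NeBot := ae_neBot.2 (IsProbabilityMeasure.ne_zero (μ := ω))
  obtain ⟨a, ha⟩ := hnull.exists
  have hsingle : ω {a}ᶜ = 0 := by
    convert ha using 2
    ext y
    simp [eq_comm]
    rfl
  refine ⟨a, ?_⟩
  ext s hs
  rw [Measure.dirac_apply' a hs]
  by_cases hmem : a ∈ s
  · have hcz : ω sᶜ = 0 := by
      apply measure_mono_null _ hsingle
      intro y hy
      simp only [Set.mem_compl_iff, Set.mem_singleton_iff] at hy ⊢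
      exact fun h => hy (h ▸ hmem)
    rw [(prob_compl_eq_zero_iff hs).mp hcz]
    simp [Set.indicator_of_mem hmem]
  · have : ω s = 0 := by
      apply measure_mono_null _ hsingle
      intro y hy
      simp only [Set.mem_compl_iff, Set.mem_singleton_iff]
      exact fun h => hmem (h ▸ hy)
    rw [this]
    simp [Set.indicator_of_notMem hmem]

lemma norm_toLp_expFn (μ : Measure ℝ) [IsProbabilityMeasure μ] (t : ℝ)
    (h : MemLp (expFn t) 2 μ) : ‖h.toLp (expFn t)‖ = 1 := by
  have h1 : (inner ℂ (h.toLp (expFn t)) (h.toLp (expFn t)) : ℂ) = 1 := by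
    rw [inner_expFn μ t t h h, sub_self, ft_zero]
  have h2 := @inner_self_eq_norm_sq ℂ _ _ _ _ (h.toLp (expFn t))
  rw [h1] at h2
  rw [RCLike.one_re] at h2
  nlinarith [norm_nonneg (h.toLp (expFn t))]

lemma orthonormal_of_bizero (μ : Measure ℝ) [IsProbabilityMeasure μ] (Λ : Set ℝ)
    (hbz : IsBiZero μ Λ) (hm : ∀ l : Λ, MemLp (expFn (l : ℝ)) 2 μ) :
    Orthonormal ℂ (fun l : Λ => (hm l).toLp (expFn (l : ℝ))) := by
  rw [orthonormal_iff_ite]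
  intro i j
  rw [inner_expFn μ i j (hm i) (hm j)]
  by_cases h : i = j
  · subst h
    simp [sub_self, ft_zero]
  · have hcoe : (j : ℝ) ≠ (i : ℝ) := fun hc => h (Subtype.ext hc.symm)
    rw [hbz j j.2 i i.2 hcoe]
    simp [h]

/-- If `μ = Measure.conv ν ω` is a convolution of two compactly supported Borel
probability measures on `ℝ` and `Λ` is a bi-zero set of `ν`, then `Λ` is a bi-zero set
of `μ`; moreover if `ω` is not a Dirac measure then `Λ` is not a spectrum of `μ`. -/
theorem bizero_of_convolution
    (ν ω : Measure ℝ) [IsProbabilityMeasure ν] [IsProbabilityMeasure ω]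
    (hν : ∃ K : Set ℝ, IsCompact K ∧ ν Kᶜ = 0)
    (hω : ∃ K : Set ℝ, IsCompact K ∧ ω Kᶜ = 0)
    (Λ : Set ℝ) (hΛ : Λ.Countable) (hbz : IsBiZero ν Λ) :
    IsBiZero (Measure.conv ν ω) Λ ∧
      ((∀ a : ℝ, ω ≠ Measure.dirac a) → ¬ IsSpectrum (Measure.conv ν ω) Λ) := by
  have hbzμ : IsBiZero (Measure.conv ν ω) Λ := by
    intro a ha b hb hne
    rw [ft_conv, hbz a ha b hb hne, zero_mul]
  refine ⟨hbzμ, ?_⟩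
  intro hnd hspec
  obtain ⟨hmem, horth, hspan⟩ := hspec
  set μ := Measure.conv ν ω with hμdef
  -- Λ is nonempty
  have hΛne : Λ.Nonempty := by
    by_contra hemp
    rw [Set.not_nonempty_iff_eq_empty] at hemp
    haveI : IsEmpty ↥Λ := by rw [hemp]; exact Set.isEmpty_coe_sort.mpr rfl
    rw [Set.range_eq_empty _, Submodule.span_empty] at hspan
    have hu : (expFn_memL2 μ 0).toLp (expFn 0) ∈
        (⊥ : Submodule ℂ (Lp ℂ 2 μ)).topologicalClosure := hspan ▸ Submodule.mem_top
    have : (expFn_memL2 μ 0).toLp (expFn 0) ∈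
        closure ((⊥ : Submodule ℂ (Lp ℂ 2 μ)) : Set (Lp ℂ 2 μ)) := hu
    rw [show ((⊥ : Submodule ℂ (Lp ℂ 2 μ)) : Set (Lp ℂ 2 μ)) = {0} from rfl,
      (isClosed_singleton).closure_eq] at this
    have h0 : (expFn_memL2 μ 0).toLp (expFn 0) = 0 := this
    have := norm_toLp_expFn μ 0 (expFn_memL2 μ 0)
    rw [h0] at this
    simp at this
  obtain ⟨l₀, hl₀⟩ := hΛne
  -- key : ν̂(s) ≠ 0 → |ω̂(s)| = 1
  have key : ∀ s : ℝ, ft ν s ≠ 0 → ‖ft ω s‖ = 1 := by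
    intro s hs
    set t : ℝ := l₀ - s with htdef
    set b := HilbertBasis.mk horth (le_of_eq hspan.symm) with hbdef
    have hmemt : MemLp (expFn t) 2 μ := expFn_memL2 μ t
    set f := hmemt.toLp (expFn t) with hfdef
    have hsum := b.hasSum_inner_mul_inner f f
    have hff : (inner ℂ f f : ℂ) = 1 := by
      rw [hfdef, inner_expFn μ t t hmemt hmemt, sub_self, ft_zero]
    have hterm : ∀ l : Λ, (inner ℂ f (b l) : ℂ) * (inner ℂ (b l) f : ℂ)
        = ((‖ft μ ((l : ℝ) - t)‖ ^ 2 : ℝ) : ℂ) := by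
      intro l
      have hb : b l = (hmem l).toLp (expFn (l : ℝ)) := by
        rw [hbdef, HilbertBasis.coe_mk]
      rw [hb, hfdef, inner_expFn μ t l hmemt (hmem l), inner_expFn μ l t (hmem l) hmemt,
        show t - (l : ℝ) = -((l : ℝ) - t) by ring, ft_neg, Complex.mul_conj,
        Complex.normSq_eq_norm_sq]
    have hsum1 : HasSum (fun l : Λ => ‖ft μ ((l : ℝ) - t)‖ ^ 2) 1 := by
      rw [hff] at hsum
      simp_rw [hterm] at hsum
      rw [show (1 : ℂ) = ((1 : ℝ) : ℂ) by norm_num] at hsum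
      exact Complex.hasSum_ofReal.mp hsum
    -- Bessel in L²(ν)
    have horthν := orthonormal_of_bizero ν Λ hbz (fun l => expFn_memL2 ν (l : ℝ))
    have hmemtν : MemLp (expFn t) 2 ν := expFn_memL2 ν t
    set g := hmemtν.toLp (expFn t) with hgdef
    have htermν : ∀ l : Λ,
        ‖(inner ℂ ((expFn_memL2 ν (l : ℝ)).toLp (expFn (l : ℝ))) g : ℂ)‖ ^ 2
          = ‖ft ν ((l : ℝ) - t)‖ ^ 2 := by
      intro l
      rw [hgdef, inner_expFn ν l t (expFn_memL2 ν (l : ℝ)) hmemtν,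
        show t - (l : ℝ) = -((l : ℝ) - t) by ring, ft_neg, RCLike.norm_conj]
    have hBessel := horthν.tsum_inner_products_le (x := g)
    have hBsummable := horthν.inner_products_summable (x := g)
    rw [norm_toLp_expFn ν t hmemtν, one_pow] at hBessel
    simp_rw [htermν] at hBessel hBsummable
    -- pointwise inequality
    have hpt : ∀ l : Λ, ‖ft μ ((l : ℝ) - t)‖ ^ 2 ≤ ‖ft ν ((l : ℝ) - t)‖ ^ 2 := by
      intro l
      rw [hμdef, ft_conv, norm_mul, mul_pow]
      have h1 := ft_norm_le ω ((l : ℝ) - t)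
      have h2 : ‖ft ω ((l : ℝ) - t)‖ ^ 2 ≤ 1 := by
        nlinarith [norm_nonneg (ft ω ((l : ℝ) - t))]
      nlinarith [sq_nonneg ‖ft ν ((l : ℝ) - t)‖]
    -- all terms are equal
    have hall : ∀ l : Λ, ‖ft μ ((l : ℝ) - t)‖ ^ 2 = ‖ft ν ((l : ℝ) - t)‖ ^ 2 := by
      by_contra hcon
      push_neg at hcon
      obtain ⟨l1, hl1⟩ := hcon
      have hlt := Summable.tsum_lt_tsum (fun l => hpt l) (lt_of_le_of_ne (hpt l1) hl1)
        hsum1.summable hBsummable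
      rw [hsum1.tsum_eq] at hlt
      linarith
    have heq := hall ⟨l₀, hl₀⟩
    rw [show ((⟨l₀, hl₀⟩ : Λ) : ℝ) - t = s by rw [htdef]; ring] at heq
    rw [hμdef, ft_conv, norm_mul] at heq
    have hν0 : ‖ft ν s‖ ≠ 0 := norm_ne_zero_iff.mpr hs
    have hω1 : ‖ft ω s‖ ^ 2 = 1 := by
      rw [mul_pow] at heq
      have h2 : ‖ft ν s‖ ^ 2 * ‖ft ω s‖ ^ 2 = ‖ft ν s‖ ^ 2 * 1 := by linarith
      exact mul_left_cancel₀ (pow_ne_zero 2 hν0) h2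
    nlinarith [norm_nonneg (ft ω s)]
  -- use continuity of ν̂ at 0
  have hcont : ContinuousAt (ft ν) 0 := (ft_continuous ν).continuousAt
  obtain ⟨δ, hδpos, hδ⟩ := Metric.continuousAt_iff.mp hcont 1 one_pos
  have hft1 : ∀ s : ℝ, |s| < δ → ft ν s ≠ 0 := by
    intro s hsδ h0
    have := hδ (x := s) (by simpa [Real.dist_eq] using hsδ)
    rw [h0, ft_zero] at this
    simp at this
  set t₁ : ℝ := δ / 2 with ht₁def
  set t₂ : ℝ := δ * Real.sqrt 2 / 4 with ht₂def
  have hsqrt2 : (1:ℝ) < Real.sqrt 2 := by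
    nlinarith [Real.sq_sqrt (show (0:ℝ) ≤ 2 by norm_num), Real.sqrt_nonneg 2]
  have hsqrt2' : Real.sqrt 2 < 2 := by
    nlinarith [Real.sq_sqrt (show (0:ℝ) ≤ 2 by norm_num), Real.sqrt_nonneg 2]
  have ht₁0 : t₁ ≠ 0 := by positivity
  have ht₁δ : |t₁| < δ := by
    rw [abs_of_pos (by positivity)]
    linarith
  have ht₂δ : |t₂| < δ := by
    rw [abs_of_pos (by positivity)]
    nlinarith
  have hirr : Irrational (t₂ / t₁) := by
    have : t₂ / t₁ = Real.sqrt 2 / 2 := by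
      rw [ht₁def, ht₂def]
      field_simp
      ring
    rw [this]
    exact irrational_sqrt_two.div_natCast (m := 2) two_ne_zero
  obtain ⟨a, ha⟩ := dirac_of_two_norms ω t₁ t₂ ht₁0 hirr
    (key t₁ (hft1 t₁ ht₁δ)) (key t₂ (hft1 t₂ ht₂δ))
  exact hnd a ha
end

section
/- Let b_k ≥ n_k ≥ 2 be integers and let Φ_k = {φ_{k,i}}_{i=0}^{n_k−1} with φ_{k,i}(x) = (−1)^i b_k^{−1}(x+i). There exists a unique sequence of nonempty compact sets (E_k)_{k≥1} in ℝ with E_k = ⋃_{i=0}^{n_k−1} φ_{k,i}(E_{k+1}) for all k ≥ 1, such that compositions φ_{k,j_k}∘⋯∘φ_{l,j_l} contract the sets E_{l+1} to points uniformly as l → ∞. -/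
open Filter

/-- The staggered contraction `φ_{k,i}(x) = (-1)^i b_k⁻¹ (x + i)`. -/
noncomputable def phi (b : ℕ → ℕ) (k i : ℕ) (x : ℝ) : ℝ :=
  (-1) ^ i * ((b k : ℝ))⁻¹ * (x + i)

/-- `iterComp b j k l = φ_{k, j k} ∘ φ_{k+1, j (k+1)} ∘ ⋯ ∘ φ_{l, j l}` (identity if `l < k`). -/
noncomputable def iterComp (b : ℕ → ℕ) (j : ℕ → ℕ) (k l : ℕ) : ℝ → ℝ :=
  if h : k ≤ l then phi b k (j k) ∘ iterComp b j (k + 1) l else id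
  termination_by (l + 1) - k
  decreasing_by omega

/-- The attractor set `E_k`: all limit points of `φ_{k,j_k}∘⋯∘φ_{l,j_l}(0)` as `l → ∞`,
over admissible digit sequences. -/
def attractor (b n : ℕ → ℕ) (k : ℕ) : Set ℝ :=
  {x : ℝ | ∃ j : ℕ → ℕ, (∀ i, j i < n i) ∧
    Tendsto (fun l => iterComp b j k l 0) atTop (nhds x)}

lemma iterComp_of_le (b j : ℕ → ℕ) {k l : ℕ} (h : k ≤ l) :
    iterComp b j k l = phi b k (j k) ∘ iterComp b j (k+1) l := by
  rw [iterComp]; simp [h]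

lemma iterComp_of_lt (b j : ℕ → ℕ) {k l : ℕ} (h : l < k) :
    iterComp b j k l = id := by
  rw [iterComp]; simp [Nat.not_le.2 h]

lemma iterComp_append (b j : ℕ → ℕ) {k m : ℕ} (h : k ≤ m + 1) :
    iterComp b j k (m+1) = iterComp b j k m ∘ phi b (m+1) (j (m+1)) := by
  obtain ⟨d, hd⟩ : ∃ d, m + 1 - k = d := ⟨_, rfl⟩
  induction d generalizing k with
  | zero =>
    have hk : k = m + 1 := by omega
    subst hk
    rw [iterComp_of_le b j le_rfl, iterComp_of_lt b j (Nat.lt_succ_self m),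
      iterComp_of_lt b j (by omega)]
    rfl
  | succ d ih =>
    have hk : k ≤ m := by omega
    rw [iterComp_of_le b j (by omega : k ≤ m + 1), iterComp_of_le b j hk,
      ih (by omega) (by omega)]
    rfl

lemma phi_lipschitz {b : ℕ → ℕ} {k : ℕ} (hb : 2 ≤ b k) (i : ℕ) (x y : ℝ) :
    |phi b k i x - phi b k i y| ≤ 2⁻¹ * |x - y| := by
  have h1 : phi b k i x - phi b k i y = (-1)^i * ((b k : ℝ))⁻¹ * (x - y) := by
    simp [phi]; ring
  rw [h1, abs_mul, abs_mul, abs_pow, abs_neg, abs_one, one_pow, one_mul, abs_inv,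
    Nat.abs_cast]
  have hb2 : (2:ℝ) ≤ (b k : ℝ) := by exact_mod_cast hb
  have h2 : ((b k:ℝ))⁻¹ ≤ 2⁻¹ := by
    apply inv_anti₀ (by norm_num) hb2
  exact mul_le_mul_of_nonneg_right h2 (abs_nonneg _)

lemma phi_mem {b : ℕ → ℕ} {k i : ℕ} (hi : i < b k) {x : ℝ}
    (hx : x ∈ Set.Icc (-1:ℝ) 1) : phi b k i x ∈ Set.Icc (-1:ℝ) 1 := by
  obtain ⟨hx1, hx2⟩ := hx
  have hb : (1:ℝ) ≤ (b k : ℝ) := by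
    have : 1 ≤ b k := by omega
    exact_mod_cast this
  have hbpos : (0:ℝ) < (b k : ℝ) := by linarith
  have hib : (i:ℝ) + 1 ≤ (b k : ℝ) := by exact_mod_cast hi
  have h1 : |x + (i:ℝ)| ≤ (b k : ℝ) := by
    rw [abs_le]
    constructor <;> nlinarith [Nat.cast_nonneg (α := ℝ) i]
  have h2 : |phi b k i x| ≤ 1 := by
    rw [phi, abs_mul, abs_mul, abs_pow, abs_neg, abs_one, one_pow, one_mul, abs_inv,
      Nat.abs_cast]
    rw [inv_mul_le_iff₀ hbpos, mul_one]
    exact h1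
  rw [Set.mem_Icc]
  exact abs_le.mp h2

lemma iterComp_lipschitz {b : ℕ → ℕ} (hb : ∀ i, 2 ≤ b i) (j : ℕ → ℕ) (k l : ℕ) (x y : ℝ) :
    |iterComp b j k l x - iterComp b j k l y| ≤ (2⁻¹:ℝ)^(l + 1 - k) * |x - y| := by
  obtain ⟨d, hd⟩ : ∃ d, l + 1 - k = d := ⟨_, rfl⟩
  rw [hd]
  induction d generalizing k with
  | zero =>
    rw [iterComp_of_lt b j (by omega), pow_zero, one_mul]; rfl
  | succ d ih =>
    have hk : k ≤ l := by omega
    rw [iterComp_of_le b j hk]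
    simp only [Function.comp_apply]
    calc |phi b k (j k) (iterComp b j (k+1) l x) - phi b k (j k) (iterComp b j (k+1) l y)|
        ≤ 2⁻¹ * |iterComp b j (k+1) l x - iterComp b j (k+1) l y| :=
          phi_lipschitz (hb k) _ _ _
      _ ≤ 2⁻¹ * ((2⁻¹:ℝ)^d * |x - y|) :=
          mul_le_mul_of_nonneg_left (ih (k+1) (by omega)) (by norm_num)
      _ = (2⁻¹:ℝ)^(d+1) * |x - y| := by ring

lemma iterComp_mem {b : ℕ → ℕ} {j : ℕ → ℕ} (hj : ∀ i, j i < b i) (k l : ℕ) {x : ℝ}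
    (hx : x ∈ Set.Icc (-1:ℝ) 1) : iterComp b j k l x ∈ Set.Icc (-1:ℝ) 1 := by
  obtain ⟨d, hd⟩ : ∃ d, l + 1 - k = d := ⟨_, rfl⟩
  induction d generalizing k with
  | zero =>
    rw [iterComp_of_lt b j (by omega)]; exact hx
  | succ d ih =>
    have hk : k ≤ l := by omega
    rw [iterComp_of_le b j hk]
    exact phi_mem (hj k) (ih (k+1) (by omega))

lemma iterComp_comp (b j : ℕ → ℕ) {k l m : ℕ} (hkl : k ≤ l) (hlm : l ≤ m) (y : ℝ) :
    iterComp b j k m y = iterComp b j k l (iterComp b j (l+1) m y) := by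
  induction m, hlm using Nat.le_induction generalizing y with
  | base => rw [iterComp_of_lt b j (Nat.lt_succ_self l)]; rfl
  | succ m hm ih =>
    rw [iterComp_append b j (by omega : k ≤ m + 1), iterComp_append b j (by omega : l + 1 ≤ m + 1)]
    exact ih _

lemma iterComp_congr (b : ℕ → ℕ) {j j' : ℕ → ℕ} {k l : ℕ}
    (h : ∀ m, k ≤ m → m ≤ l → j m = j' m) : iterComp b j k l = iterComp b j' k l := by
  obtain ⟨d, hd⟩ : ∃ d, l + 1 - k = d := ⟨_, rfl⟩
  induction d generalizing k with
  | zero =>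
    have hk : l < k := by omega
    rw [iterComp_of_lt b j hk, iterComp_of_lt b j' hk]
  | succ d ih =>
    have hk : k ≤ l := by omega
    rw [iterComp_of_le b j hk, iterComp_of_le b j' hk, h k le_rfl hk,
      ih (fun m h1 h2 => h m (by omega) h2) (by omega)]

noncomputable def glim (b j : ℕ → ℕ) (k : ℕ) : ℝ :=
  limUnder atTop (fun l => iterComp b j k l 0)

lemma iterComp_zero_dist {b j : ℕ → ℕ} (hb : ∀ i, 2 ≤ b i) (hj : ∀ i, j i < b i)
    {k l m : ℕ} (hkl : k ≤ l) (hlm : l ≤ m) :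
    |iterComp b j k l 0 - iterComp b j k m 0| ≤ (2⁻¹:ℝ)^(l-k) := by
  rw [iterComp_comp b j hkl hlm]
  set w := iterComp b j (l+1) m 0 with hw
  have hwm : w ∈ Set.Icc (-1:ℝ) 1 := iterComp_mem hj _ _ (by norm_num)
  have h1 : |iterComp b j k l 0 - iterComp b j k l w| ≤ (2⁻¹:ℝ)^(l+1-k) * |(0:ℝ) - w| :=
    iterComp_lipschitz hb j k l 0 w
  have h2 : |(0:ℝ) - w| ≤ 1 := by
    rw [zero_sub, abs_neg, abs_le]; exact ⟨hwm.1, hwm.2⟩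
  calc |iterComp b j k l 0 - iterComp b j k l w|
      ≤ (2⁻¹:ℝ)^(l+1-k) * |(0:ℝ) - w| := h1
    _ ≤ (2⁻¹:ℝ)^(l+1-k) * 1 := by
        exact mul_le_mul_of_nonneg_left h2 (by positivity)
    _ ≤ (2⁻¹:ℝ)^(l-k) := by
        rw [mul_one]
        exact pow_le_pow_of_le_one (by norm_num) (by norm_num) (by omega)

lemma iterComp_cauchy {b j : ℕ → ℕ} (hb : ∀ i, 2 ≤ b i) (hj : ∀ i, j i < b i) (k : ℕ) :
    CauchySeq (fun l => iterComp b j k l 0) := by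
  rw [Metric.cauchySeq_iff']
  intro ε hε
  obtain ⟨M, hM⟩ := exists_pow_lt_of_lt_one hε (by norm_num : (2⁻¹:ℝ) < 1)
  refine ⟨k + M, fun m hm => ?_⟩
  rw [Real.dist_eq, abs_sub_comm]
  calc |iterComp b j k (k+M) 0 - iterComp b j k m 0| ≤ (2⁻¹:ℝ)^(k+M-k) :=
        iterComp_zero_dist hb hj (by omega) hm
    _ = (2⁻¹:ℝ)^M := by congr 1; omega
    _ < ε := hM

lemma tendsto_glim {b j : ℕ → ℕ} (hb : ∀ i, 2 ≤ b i) (hj : ∀ i, j i < b i) (k : ℕ) :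
    Tendsto (fun l => iterComp b j k l 0) atTop (nhds (glim b j k)) := by
  obtain ⟨x, hx⟩ := cauchySeq_tendsto_of_complete (iterComp_cauchy hb hj k)
  have : glim b j k = x := hx.limUnder_eq
  rw [this]; exact hx

lemma glim_dist {b j : ℕ → ℕ} (hb : ∀ i, 2 ≤ b i) (hj : ∀ i, j i < b i)
    {k l : ℕ} (hkl : k ≤ l) :
    |iterComp b j k l 0 - glim b j k| ≤ (2⁻¹:ℝ)^(l-k) := by
  have h1 : Tendsto (fun m => |iterComp b j k l 0 - iterComp b j k m 0|) atTop
      (nhds (|iterComp b j k l 0 - glim b j k|)) :=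
    (tendsto_const_nhds.sub (tendsto_glim hb hj k)).abs
  refine le_of_tendsto h1 ?_
  filter_upwards [eventually_ge_atTop l] with m hm
  exact iterComp_zero_dist hb hj hkl hm

lemma glim_mem {b j : ℕ → ℕ} (hb : ∀ i, 2 ≤ b i) (hj : ∀ i, j i < b i) (k : ℕ) :
    glim b j k ∈ Set.Icc (-1:ℝ) 1 := by
  refine isClosed_Icc.mem_of_tendsto (tendsto_glim hb hj k) ?_
  exact Eventually.of_forall fun l => iterComp_mem hj _ _ (by norm_num)

lemma continuous_stage (b : ℕ → ℕ) (k l : ℕ) :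
    Continuous (fun j : ℕ → ℕ => iterComp b j k l 0) := by
  refine continuous_iff_continuousAt.2 fun j₀ => ?_
  have hopen : IsOpen {j : ℕ → ℕ | ∀ m ∈ Finset.Icc k l, j m = j₀ m} := by
    have he : {j : ℕ → ℕ | ∀ m ∈ Finset.Icc k l, j m = j₀ m}
        = ⋂ m ∈ Finset.Icc k l, (fun j : ℕ → ℕ => j m) ⁻¹' {j₀ m} := by
      ext j; simp
    rw [he]
    exact isOpen_biInter_finset fun m _ => (continuous_apply m).isOpen_preimage _ (isOpen_discrete _)
  have hU : {j : ℕ → ℕ | ∀ m ∈ Finset.Icc k l, j m = j₀ m} ∈ nhds j₀ :=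
    hopen.mem_nhds (fun m _ => rfl)
  have hev : (fun j : ℕ → ℕ => iterComp b j k l 0) =ᶠ[nhds j₀]
      (fun _ => iterComp b j₀ k l 0) := by
    filter_upwards [hU] with j hj
    exact congrFun (iterComp_congr b (fun m h1 h2 => hj m (Finset.mem_Icc.2 ⟨h1, h2⟩))) 0
  exact ContinuousAt.congr continuousAt_const hev.symm

lemma hb_of {b n : ℕ → ℕ} (hbn : ∀ k, n k ≤ b k) (hn : ∀ k, 2 ≤ n k) : ∀ i, 2 ≤ b i :=
  fun i => le_trans (hn i) (hbn i)

lemma phi_continuous (b : ℕ → ℕ) (k i : ℕ) : Continuous (phi b k i) := by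
  unfold phi; fun_prop

section existence
variable {b n : ℕ → ℕ} (hbn : ∀ k, n k ≤ b k) (hn : ∀ k, 2 ≤ n k)
include hbn hn

lemma attractor_eq_image (k : ℕ) :
    attractor b n k = (fun j => glim b j k) '' (Set.pi Set.univ fun i => Set.Iio (n i)) := by
  have hb : ∀ i, 2 ≤ b i := fun i => le_trans (hn i) (hbn i)
  ext x
  constructor
  · rintro ⟨j, hj, ht⟩
    exact ⟨j, by simpa [Set.mem_pi] using hj, ht.limUnder_eq⟩
  · rintro ⟨j, hjS, rfl⟩
    have hj : ∀ i, j i < n i := by simpa [Set.mem_pi] using hjS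
    exact ⟨j, hj, tendsto_glim hb (fun i => lt_of_lt_of_le (hj i) (hbn i)) k⟩

lemma attractor_isCompact (k : ℕ) : IsCompact (attractor b n k) := by
  have hb : ∀ i, 2 ≤ b i := fun i => le_trans (hn i) (hbn i)
  rw [attractor_eq_image hbn hn k]
  have hS : IsCompact (Set.pi Set.univ fun i => Set.Iio (n i)) :=
    isCompact_univ_pi fun i => (Set.finite_Iio _).isCompact
  refine hS.image_of_continuousOn ?_
  have htu : TendstoUniformlyOn (fun l (j : ℕ → ℕ) => iterComp b j k l 0)
      (fun j => glim b j k) atTop (Set.pi Set.univ fun i => Set.Iio (n i)) := by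
    rw [Metric.tendstoUniformlyOn_iff]
    intro ε hε
    obtain ⟨M, hM⟩ := exists_pow_lt_of_lt_one hε (by norm_num : (2⁻¹:ℝ) < 1)
    filter_upwards [eventually_ge_atTop (k + M)] with l hl j hjS
    have hj : ∀ i, j i < b i := by
      intro i
      have : j i < n i := by simpa [Set.mem_pi] using hjS i (Set.mem_univ i)
      exact lt_of_lt_of_le this (hbn i)
    rw [Real.dist_eq, abs_sub_comm]
    calc |iterComp b j k l 0 - glim b j k| ≤ (2⁻¹:ℝ)^(l-k) := glim_dist hb hj (by omega)
      _ ≤ (2⁻¹:ℝ)^M := pow_le_pow_of_le_one (by norm_num) (by norm_num) (by omega)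
      _ < ε := hM
  exact htu.continuousOn (Frequently.of_forall fun l => (continuous_stage b k l).continuousOn)

lemma attractor_nonempty (k : ℕ) : (attractor b n k).Nonempty := by
  have hb : ∀ i, 2 ≤ b i := fun i => le_trans (hn i) (hbn i)
  have hj : ∀ i, (fun _ : ℕ => 0) i < n i := fun i => lt_of_lt_of_le (by norm_num) (hn i)
  exact ⟨glim b (fun _ => 0) k, (fun _ => 0), hj,
    tendsto_glim hb (fun i => lt_of_lt_of_le (hj i) (hbn i)) k⟩

omit hn in
lemma attractor_subset_Icc (k : ℕ) : attractor b n k ⊆ Set.Icc (-1:ℝ) 1 := by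
  rintro x ⟨j, hj, ht⟩
  have hj' : ∀ i, j i < b i := fun i => lt_of_lt_of_le (hj i) (hbn i)
  exact isClosed_Icc.mem_of_tendsto ht
    (Eventually.of_forall fun l => iterComp_mem hj' _ _ (by norm_num))

lemma attractor_invariance (k : ℕ) :
    attractor b n k = ⋃ i ∈ Finset.range (n k), phi b k i '' attractor b n (k + 1) := by
  have hb : ∀ i, 2 ≤ b i := fun i => le_trans (hn i) (hbn i)
  ext x
  simp only [Set.mem_iUnion, Finset.mem_range, Set.mem_image]
  constructor
  · rintro ⟨j, hj, ht⟩
    have hjb : ∀ i, j i < b i := fun i => lt_of_lt_of_le (hj i) (hbn i)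
    refine ⟨j k, hj k, glim b j (k+1), ⟨j, hj, tendsto_glim hb hjb (k+1)⟩, ?_⟩
    have h1 : Tendsto (fun l => phi b k (j k) (iterComp b j (k+1) l 0)) atTop
        (nhds (phi b k (j k) (glim b j (k+1)))) :=
      ((phi_continuous b k (j k)).tendsto _).comp (tendsto_glim hb hjb (k+1))
    have h2 : (fun l => phi b k (j k) (iterComp b j (k+1) l 0)) =ᶠ[atTop]
        (fun l => iterComp b j k l 0) := by
      filter_upwards [eventually_ge_atTop k] with l hl
      rw [iterComp_of_le b j hl]; rfl
    exact tendsto_nhds_unique (h1.congr' h2) ht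
  · rintro ⟨i, hi, y, ⟨j, hj, ht⟩, rfl⟩
    set j' := Function.update j k i with hj'def
    have hj' : ∀ m, j' m < n m := by
      intro m
      by_cases hm : m = k
      · subst hm; simpa [j', Function.update_self] using hi
      · simpa [j', Function.update_of_ne hm] using hj m
    refine ⟨j', hj', ?_⟩
    have h1 : Tendsto (fun l => phi b k i (iterComp b j (k+1) l 0)) atTop
        (nhds (phi b k i y)) := ((phi_continuous b k i).tendsto _).comp ht
    have h2 : (fun l => phi b k i (iterComp b j (k+1) l 0)) =ᶠ[atTop]
        (fun l => iterComp b j' k l 0) := by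
      filter_upwards [eventually_ge_atTop k] with l hl
      rw [iterComp_of_le b j' hl]
      have he : iterComp b j (k+1) l = iterComp b j' (k+1) l :=
        iterComp_congr b (fun m h1 h2 => by
          rw [hj'def, Function.update_of_ne (by omega)])
      simp only [Function.comp_apply, ← he, hj'def, Function.update_self]
      exact congrArg _ (congrFun he 0)
    exact h1.congr' h2

lemma attractor_contraction (k : ℕ) {ε : ℝ} (hε : 0 < ε) :
    ∃ N : ℕ, ∀ (j : ℕ → ℕ), (∀ i, j i < n i) →
      ∀ l : ℕ, k ≤ l → N ≤ l → ∀ a ∈ attractor b n (l + 1),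
        |iterComp b j k l 0 - iterComp b j k l a| < ε := by
  have hb : ∀ i, 2 ≤ b i := fun i => le_trans (hn i) (hbn i)
  obtain ⟨M, hM⟩ := exists_pow_lt_of_lt_one hε (by norm_num : (2⁻¹:ℝ) < 1)
  refine ⟨k + M, fun j hj l hkl hNl a ha => ?_⟩
  have haI : a ∈ Set.Icc (-1:ℝ) 1 := attractor_subset_Icc hbn (l+1) ha
  have h2 : |(0:ℝ) - a| ≤ 1 := by
    rw [zero_sub, abs_neg, abs_le]; exact ⟨haI.1, haI.2⟩
  calc |iterComp b j k l 0 - iterComp b j k l a|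
      ≤ (2⁻¹:ℝ)^(l+1-k) * |(0:ℝ) - a| := iterComp_lipschitz hb j k l 0 a
    _ ≤ (2⁻¹:ℝ)^(l+1-k) * 1 := mul_le_mul_of_nonneg_left h2 (by positivity)
    _ ≤ (2⁻¹:ℝ)^M := by
        rw [mul_one]
        exact pow_le_pow_of_le_one (by norm_num) (by norm_num) (by omega)
    _ < ε := hM

end existence

lemma attractor_unique {b n : ℕ → ℕ} (hbn : ∀ k, n k ≤ b k) (hn : ∀ k, 2 ≤ n k)
    (E : ℕ → Set ℝ)
    (hE1 : ∀ k, IsCompact (E k) ∧ (E k).Nonempty)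
    (hE2 : ∀ k, E k = ⋃ i ∈ Finset.range (n k), phi b k i '' E (k + 1))
    (hE3 : ∀ k, ∀ ε > (0:ℝ), ∃ N : ℕ, ∀ (j : ℕ → ℕ), (∀ i, j i < n i) →
        ∀ l : ℕ, k ≤ l → N ≤ l → ∀ a ∈ E (l + 1),
          |iterComp b j k l 0 - iterComp b j k l a| < ε) :
    E = attractor b n := by
  funext k
  apply Set.Subset.antisymm
  · intro x hx
    have hstep : ∀ l (y : ℝ), y ∈ E l → ∃ i, i < n l ∧ ∃ z, z ∈ E (l+1) ∧ phi b l i z = y := by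
      intro l y hy
      have hy2 : y ∈ ⋃ i ∈ Finset.range (n l), phi b l i '' E (l+1) := by
        rw [← hE2 l]; exact hy
      simp only [Set.mem_iUnion, Finset.mem_range, Set.mem_image] at hy2
      obtain ⟨i, hi, z, hz, hphiz⟩ := hy2
      exact ⟨i, hi, z, hz, hphiz⟩
    choose! dig hdig nxt hnxt hphiv using hstep
    obtain ⟨p, hp0, hps⟩ : ∃ p : ℕ → ℝ, p 0 = x ∧ ∀ d, p (d+1) = nxt (k+d) (p d) :=
      ⟨fun d => Nat.rec x (fun d pd => nxt (k+d) pd) d, rfl, fun d => rfl⟩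
    have hpmem : ∀ d, p d ∈ E (k + d) := by
      intro d
      induction d with
      | zero => simpa [hp0] using hx
      | succ d ih => rw [hps d]; exact hnxt (k+d) (p d) ih
    set j : ℕ → ℕ := fun m => if k ≤ m then dig m (p (m - k)) else 0 with hjdef
    have hpm : ∀ m, k ≤ m → p (m - k) ∈ E m := by
      intro m hm
      have := hpmem (m - k)
      rwa [Nat.add_sub_cancel' hm] at this
    have hjn : ∀ i, j i < n i := by
      intro i
      by_cases hi : k ≤ i
      · simp only [hjdef, if_pos hi]
        exact hdig i (p (i - k)) (hpm i hi)
      · simp only [hjdef, if_neg hi]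
        exact lt_of_lt_of_le (by norm_num) (hn i)
    have hx2 : ∀ d, iterComp b j k (k+d) (p (d+1)) = x := by
      intro d
      induction d with
      | zero =>
        show iterComp b j k k (p 1) = x
        rw [iterComp_of_le b j le_rfl]
        simp only [Function.comp_apply]
        rw [iterComp_of_lt b j (Nat.lt_succ_self k)]
        have hjk : j k = dig k x := by
          simp only [hjdef, if_pos le_rfl, Nat.sub_self, hp0]
        have hp1 : p 1 = nxt k x := by rw [hps 0]; simp [hp0]
        rw [hjk]
        simp only [id_eq]
        rw [hp1]
        exact hphiv k x hx
      | succ d ih =>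
        rw [show k + (d+1) = (k+d)+1 from rfl, iterComp_append b j (by omega)]
        simp only [Function.comp_apply]
        have hj1 : j (k+d+1) = dig (k+d+1) (p (d+1)) := by
          simp only [hjdef, if_pos (by omega : k ≤ k+d+1)]
          have he : k + d + 1 - k = d + 1 := by omega
          rw [he]
        have hp2 : p (d+1+1) = nxt (k+d+1) (p (d+1)) := hps (d+1)
        rw [hj1, hp2, hphiv (k+d+1) (p (d+1)) (hpmem (d+1))]
        exact ih
    refine ⟨j, hjn, ?_⟩
    rw [Metric.tendsto_atTop]
    intro ε hε
    obtain ⟨N, hN⟩ := hE3 k ε hε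
    refine ⟨max k N, fun l hl => ?_⟩
    have hkl : k ≤ l := le_trans (le_max_left _ _) hl
    have h1 := hx2 (l - k)
    rw [show k + (l - k) = l by omega] at h1
    have ha : p (l - k + 1) ∈ E (l + 1) := by
      have := hpmem (l - k + 1)
      rwa [show k + (l - k + 1) = l + 1 by omega] at this
    have h2 := hN j hjn l hkl (le_trans (le_max_right _ _) hl) (p (l - k + 1)) ha
    rw [h1] at h2
    rwa [Real.dist_eq]
  · rintro x ⟨j, hj, ht⟩
    choose a ha using fun l => (hE1 (l+1)).2
    have hmemE : ∀ d, ∀ y ∈ E (k+d+1), iterComp b j k (k+d) y ∈ E k := by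
      intro d
      induction d with
      | zero =>
        intro y hy
        rw [show k + 0 = k from rfl] at hy ⊢
        rw [iterComp_of_le b j le_rfl]
        simp only [Function.comp_apply]
        rw [iterComp_of_lt b j (Nat.lt_succ_self k)]
        simp only [id_eq]
        rw [hE2 k]
        simp only [Set.mem_iUnion, Finset.mem_range, Set.mem_image]
        exact ⟨j k, hj k, y, hy, rfl⟩
      | succ d ih =>
        intro y hy
        rw [show k + (d+1) = (k+d)+1 from rfl, iterComp_append b j (by omega)]
        simp only [Function.comp_apply]
        apply ih
        rw [hE2 (k+d+1)]
        simp only [Set.mem_iUnion, Finset.mem_range, Set.mem_image]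
        exact ⟨j (k+d+1), hj _, y, hy, rfl⟩
    have htend2 : Tendsto (fun l => iterComp b j k l (a l)) atTop (nhds x) := by
      rw [Metric.tendsto_atTop]
      intro ε hε
      obtain ⟨N2, hN2⟩ := hE3 k (ε/2) (by linarith)
      rw [Metric.tendsto_atTop] at ht
      obtain ⟨N1, hN1⟩ := ht (ε/2) (by linarith)
      refine ⟨max (max k N1) N2, fun l hl => ?_⟩
      have hkl : k ≤ l := by omega
      calc dist (iterComp b j k l (a l)) x
          ≤ dist (iterComp b j k l (a l)) (iterComp b j k l 0)
            + dist (iterComp b j k l 0) x := dist_triangle _ _ _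
        _ < ε/2 + ε/2 := by
            apply add_lt_add
            · rw [Real.dist_eq, abs_sub_comm]
              exact hN2 j hj l hkl (by omega) (a l) (ha l)
            · exact hN1 l (by omega)
        _ = ε := by ring
    refine (hE1 k).1.isClosed.mem_of_tendsto htend2 ?_
    filter_upwards [eventually_ge_atTop k] with l hl
    have hmem := hmemE (l - k) (a l)
      (by rw [show k + (l - k) + 1 = l + 1 by omega]; exact ha l)
    rwa [show k + (l - k) = l by omega] at hmem


/-- For integers `b_k ≥ n_k ≥ 2` there is a unique sequence of nonempty
compact sets `(E_k)` with `E_k = ⋃_{i<n_k} φ_{k,i}(E_{k+1})`, and the compositions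
`φ_{k,j_k}∘⋯∘φ_{l,j_l}` contract the sets `E_{l+1}` to points uniformly as `l → ∞`. -/
theorem moran_attractor_exists_unique
    (b n : ℕ → ℕ) (hbn : ∀ k, n k ≤ b k) (hn : ∀ k, 2 ≤ n k) :
    ∃! E : ℕ → Set ℝ,
      (∀ k, IsCompact (E k) ∧ (E k).Nonempty) ∧
      (∀ k, E k = ⋃ i ∈ Finset.range (n k), phi b k i '' E (k + 1)) ∧
      (∀ k, ∀ ε > (0:ℝ), ∃ N : ℕ, ∀ (j : ℕ → ℕ), (∀ i, j i < n i) →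
        ∀ l : ℕ, k ≤ l → N ≤ l → ∀ a ∈ E (l + 1),
          |iterComp b j k l 0 - iterComp b j k l a| < ε) := by
  refine ⟨attractor b n,
    ⟨fun k => ⟨attractor_isCompact hbn hn k, attractor_nonempty hbn hn k⟩,
      fun k => attractor_invariance hbn hn k,
      fun k ε hε => attractor_contraction hbn hn k hε⟩,
    fun E hE => attractor_unique hbn hn E hE.1 hE.2.1 hE.2.2⟩
end
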